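/- Let Q = [-1,1] × [0,1] ⊆ ℝ² with operations ⟨a,b⟩ ⊕ ⟨c,d⟩ = ⟨max{-1, min{1, a+c}}, 1/2⟩, -⟨a,b⟩ = ⟨-a, 1-b⟩, ⟨a,b⟩⁺ = ⟨max{0,a}, 1/2⟩, ⟨a,b⟩⁻ = ⟨min{0,a}, 1/2⟩, 0 = ⟨0, 1/2⟩, 1 = ⟨1, 1/2⟩. Then Q is a strong quasi-MV* algebra but not an MV*-algebra (the identity x ⊕ 0 = x fails). -/

import Mathlib

def qmvVee {A : Type*} (ad : A → A → A) (ng ps ns : A → A) (x y : A) : A :=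
  ad (ad (ps x) (ps (ad (ng (ps x)) (ps y)))) (ad (ns x) (ps (ad (ng (ns x)) (ns y))))

structure IsQuasiMVStar {A : Type*} (ad : A → A → A) (ng ps ns : A → A) (z o : A) : Prop where
  qmv1 : ∀ x y, ad x y = ad y x
  qmv2 : ∀ x y w, ad (ad o x) (ad y (ad o w)) = ad (ad (ad o x) y) (ad o w)
  qmv3 : ∀ x, ad (ad x o) o = o
  qmv4 : ∀ x y, ad (ad x y) z = ad x y
  qmv5a : ∀ x, ad (ps x) z = ps (ad x z)
  qmv5b : ∀ x, ps (ad x z) = ad o (ad (ng o) x)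
  qmv5c : ∀ x, ad (ns x) z = ns (ad x z)
  qmv5d : ∀ x, ns (ad x z) = ad (ng o) (ad o x)
  qmv6 : ∀ x y, ad x y = ad (ad (ps x) (ps y)) (ad (ns x) (ns y))
  qmv7 : z = ng z
  qmv8 : ∀ x, ad x (ng x) = z
  qmv9 : ∀ x y, ng (ad x y) = ad (ng x) (ng y)
  qmv10 : ∀ x, ng (ng x) = x
  qmv11 : ∀ x y, ps (ad (ng x) (ad x y)) = ad (ng (ps x)) (ad (ps x) (ps y))
  qmv12 : ∀ x y, qmvVee ad ng ps ns x y = qmvVee ad ng ps ns y x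
  qmv13 : ∀ x y w, qmvVee ad ng ps ns x (qmvVee ad ng ps ns y w) = qmvVee ad ng ps ns (qmvVee ad ng ps ns x y) w
  qmv14 : ∀ x y w, ad x (qmvVee ad ng ps ns y w) = qmvVee ad ng ps ns (ad x y) (ad x w)

def IsStrongQuasiMVStar {A : Type*} (ad : A → A → A) (ng ps ns : A → A) (z o : A) : Prop :=
  IsQuasiMVStar ad ng ps ns z o ∧ (∀ x, ps x = ad (ps x) z) ∧ (∀ x, ns x = ad (ns x) z)

/-- The carrier `[-1,1] × [0,1]`. -/
def QC : Type := {p : ℝ × ℝ // p.1 ∈ Set.Icc (-1 : ℝ) 1 ∧ p.2 ∈ Set.Icc (0 : ℝ) 1}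

noncomputable def qAdd (x y : QC) : QC :=
  ⟨(max (-1) (min 1 (x.val.1 + y.val.1)), 1/2), by
    refine ⟨Set.mem_Icc.mpr ⟨le_max_left _ _, max_le (by norm_num) (min_le_left _ _)⟩,
      Set.mem_Icc.mpr ⟨by norm_num, by norm_num⟩⟩⟩

noncomputable def qNeg (x : QC) : QC :=
  ⟨(-x.val.1, 1 - x.val.2), by
    obtain ⟨h1, h2⟩ := x.prop
    rw [Set.mem_Icc] at h1 h2
    refine ⟨Set.mem_Icc.mpr ⟨?_, ?_⟩, Set.mem_Icc.mpr ⟨?_, ?_⟩⟩ <;> simp <;>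
      linarith [h1.1, h1.2, h2.1, h2.2]⟩

noncomputable def qPos (x : QC) : QC :=
  ⟨(max 0 x.val.1, 1/2), by
    obtain ⟨h1, _⟩ := x.prop
    rw [Set.mem_Icc] at h1
    exact ⟨Set.mem_Icc.mpr ⟨le_trans (by norm_num) (le_max_left _ _),
      max_le (by norm_num) h1.2⟩, Set.mem_Icc.mpr ⟨by norm_num, by norm_num⟩⟩⟩

noncomputable def qNs (x : QC) : QC :=
  ⟨(min 0 x.val.1, 1/2), by
    obtain ⟨h1, _⟩ := x.prop
    rw [Set.mem_Icc] at h1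
    exact ⟨Set.mem_Icc.mpr ⟨le_min (by norm_num) h1.1,
      le_trans (min_le_left _ _) (by norm_num)⟩,
      Set.mem_Icc.mpr ⟨by norm_num, by norm_num⟩⟩⟩

noncomputable def qZero : QC := ⟨(0, 1/2), by constructor <;> (rw [Set.mem_Icc]; constructor <;> norm_num)⟩

noncomputable def qOne : QC := ⟨(1, 1/2), by constructor <;> (rw [Set.mem_Icc]; constructor <;> norm_num)⟩


noncomputable def fc (t : ℝ) : ℝ := max (-1) (min 1 t)
lemma fc_def (t : ℝ) : max (-1) (min 1 t) = fc t := rfl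
lemma fc_id {t : ℝ} (h1 : -1 ≤ t) (h2 : t ≤ 1) : fc t = t := by
  rw [fc, min_eq_right h2, max_eq_right h1]
lemma fc_hi {t : ℝ} (h : 1 ≤ t) : fc t = 1 := by
  rw [fc, min_eq_left h, max_eq_right (by norm_num)]
lemma fc_lo {t : ℝ} (h : t ≤ -1) : fc t = -1 := by
  rw [fc, min_eq_right (by linarith), max_eq_left h]
lemma fc_lb (t : ℝ) : -1 ≤ fc t := le_max_left _ _
lemma fc_ub (t : ℝ) : fc t ≤ 1 := max_le (by norm_num) (min_le_left _ _)
lemma fc_nonneg {t : ℝ} (h : 0 ≤ t) : 0 ≤ fc t :=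
  le_trans (le_min (by norm_num) h) (le_max_right _ _)
lemma fc_mono {s t : ℝ} (h : s ≤ t) : fc s ≤ fc t :=
  max_le_max le_rfl (min_le_min le_rfl h)
lemma fc_zero : fc 0 = 0 := fc_id (by norm_num) (by norm_num)
lemma pmadd (a : ℝ) : max 0 a + min 0 a = a := by
  rcases le_total 0 a with h|h
  · rw [max_eq_right h, min_eq_left h, add_zero]
  · rw [max_eq_left h, min_eq_right h, zero_add]

lemma fc_neg (t : ℝ) : fc (-t) = -fc t := by
  rcases le_total 1 t with h | h
  · rw [fc_hi h, fc_lo (by linarith)]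
  · rcases le_total t (-1) with h2 | h2
    · rw [fc_lo h2, fc_hi (by linarith)]; norm_num
    · rw [fc_id (by linarith) (by linarith), fc_id h2 h]

lemma vee_core (a c : ℝ) (ha1 : -1 ≤ a) (ha2 : a ≤ 1) (hc1 : -1 ≤ c) (hc2 : c ≤ 1) :
    fc (fc (max 0 a + max 0 (fc (-(max 0 a) + max 0 c)))
      + fc (min 0 a + max 0 (fc (-(min 0 a) + min 0 c)))) = max a c := by
  have hA0 : (0:ℝ) ≤ max 0 a := le_max_left _ _
  have hA1 : max 0 a ≤ 1 := max_le (by norm_num) ha2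
  have hC0 : (0:ℝ) ≤ max 0 c := le_max_left _ _
  have hC1 : max 0 c ≤ 1 := max_le (by norm_num) hc2
  have hA'0 : (-1:ℝ) ≤ min 0 a := le_min (by norm_num) ha1
  have hA'1 : min 0 a ≤ 0 := min_le_left _ _
  have hC'0 : (-1:ℝ) ≤ min 0 c := le_min (by norm_num) hc1
  have hC'1 : min 0 c ≤ 0 := min_le_left _ _
  rw [fc_id (t := -(max 0 a) + max 0 c) (by linarith) (by linarith)]
  rw [fc_id (t := -(min 0 a) + min 0 c) (by linarith) (by linarith)]
  have e1 : max 0 a + max 0 (-(max 0 a) + max 0 c) = max (max 0 a) (max 0 c) := by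
    rcases le_total (max 0 a) (max 0 c) with h|h
    · rw [max_eq_right (by linarith : (0:ℝ) ≤ -(max 0 a) + max 0 c), max_eq_right h]; ring
    · rw [max_eq_left (by linarith : -(max 0 a) + max 0 c ≤ 0), max_eq_left h]; ring
  have e2 : min 0 a + max 0 (-(min 0 a) + min 0 c) = max (min 0 a) (min 0 c) := by
    rcases le_total (min 0 a) (min 0 c) with h|h
    · rw [max_eq_right (by linarith : (0:ℝ) ≤ -(min 0 a) + min 0 c), max_eq_right h]; ring
    · rw [max_eq_left (by linarith : -(min 0 a) + min 0 c ≤ 0), max_eq_left h]; ring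
  rw [e1, e2]
  have hP0 : (0:ℝ) ≤ max (max 0 a) (max 0 c) := le_trans hA0 (le_max_left _ _)
  have hP1 : max (max 0 a) (max 0 c) ≤ 1 := max_le hA1 hC1
  have hN0 : (-1:ℝ) ≤ max (min 0 a) (min 0 c) := le_trans hA'0 (le_max_left _ _)
  have hN1 : max (min 0 a) (min 0 c) ≤ 0 := max_le hA'1 hC'1
  rw [fc_id (by linarith) hP1, fc_id hN0 (by linarith)]
  rw [fc_id (by linarith) (by linarith)]
  rcases le_total a c with h|h
  · rw [max_eq_right (max_le_max le_rfl h), max_eq_right (min_le_min le_rfl h),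
      max_eq_right h, pmadd]
  · rw [max_eq_left (max_le_max le_rfl h), max_eq_left (min_le_min le_rfl h),
      max_eq_left h, pmadd]

lemma vee_fst (x y : QC) :
    (qmvVee qAdd qNeg qPos qNs x y).val = (max x.val.1 y.val.1, 1/2) := by
  obtain ⟨⟨a,b⟩, ha, hb⟩ := x
  obtain ⟨⟨c,d⟩, hc, hd⟩ := y
  simp only [Set.mem_Icc] at ha hc
  simp only [qmvVee, qAdd, qNeg, qPos, qNs, fc_def]
  exact Prod.ext (vee_core a c ha.1 ha.2 hc.1 hc.2) rfl

/-- `Q = [-1,1] × [0,1]` with the indicated operations is a strong quasi-MV* algebra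
but not an MV*-algebra: the identity `x ⊕ 0 = x` fails. -/
theorem stmt3 :
    IsStrongQuasiMVStar qAdd qNeg qPos qNs qZero qOne ∧ ∃ x : QC, qAdd x qZero ≠ x := by
  constructor
  · refine ⟨⟨?_, ?_, ?_, ?_, ?_, ?_, ?_, ?_, ?_, ?_, ?_, ?_, ?_, ?_, ?_, ?_, ?_⟩, ?_, ?_⟩
    -- qmv1
    · intro x y
      apply Subtype.ext
      simp only [qAdd, fc_def]
      exact Prod.ext (congrArg fc (add_comm _ _)) rfl
    -- qmv2
    · intro x y w
      obtain ⟨⟨a,b⟩, ha, hb⟩ := x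
      obtain ⟨⟨c,d⟩, hc, hd⟩ := y
      obtain ⟨⟨e,g⟩, he, hg⟩ := w
      simp only [Set.mem_Icc] at ha hc he
      apply Subtype.ext
      simp only [qAdd, qOne, fc_def]
      refine Prod.ext ?_ rfl
      show fc (fc (1 + a) + fc (c + fc (1 + e))) = fc (fc (fc (1 + a) + c) + fc (1 + e))
      have hA0 : 0 ≤ fc (1 + a) := fc_nonneg (by linarith [ha.1])
      have hA1 : fc (1 + a) ≤ 1 := fc_ub _
      have hE0 : 0 ≤ fc (1 + e) := fc_nonneg (by linarith [he.1])
      have hE1 : fc (1 + e) ≤ 1 := fc_ub _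
      rcases le_total (fc (1 + a) + c) 1 with h1 | h1
      · rcases le_total (c + fc (1 + e)) 1 with h2 | h2
        · rw [fc_id (by linarith [hc.1]) h1, fc_id (by linarith [hc.1]) h2, ← add_assoc]
        · rw [fc_hi h2, fc_id (by linarith [hc.1]) h1,
            fc_hi (t := fc (1 + a) + 1) (by linarith),
            fc_hi (t := fc (1 + a) + c + fc (1 + e)) (by linarith)]
      · rw [fc_hi h1]
        rcases le_total (c + fc (1 + e)) 1 with h2 | h2
        · rw [fc_id (by linarith [hc.1]) h2,
            fc_hi (t := fc (1 + a) + (c + fc (1 + e))) (by linarith),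
            fc_hi (t := 1 + fc (1 + e)) (by linarith)]
        · rw [fc_hi h2, fc_hi (t := fc (1 + a) + 1) (by linarith),
            fc_hi (t := 1 + fc (1 + e)) (by linarith)]
    -- qmv3
    · intro x
      obtain ⟨⟨a,b⟩, ha, hb⟩ := x
      simp only [Set.mem_Icc] at ha
      apply Subtype.ext
      simp only [qAdd, qOne, fc_def]
      refine Prod.ext ?_ rfl
      show fc (fc (a + 1) + 1) = 1
      exact fc_hi (by linarith [fc_nonneg (t := a + 1) (by linarith [ha.1])])
    -- qmv4
    · intro x y
      apply Subtype.ext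
      simp only [qAdd, qZero, fc_def]
      refine Prod.ext ?_ rfl
      show fc (fc (x.val.1 + y.val.1) + 0) = fc (x.val.1 + y.val.1)
      rw [add_zero, fc_id (fc_lb _) (fc_ub _)]
    -- qmv5a
    · intro x
      obtain ⟨⟨a,b⟩, ha, hb⟩ := x
      simp only [Set.mem_Icc] at ha
      apply Subtype.ext
      simp only [qAdd, qPos, qZero, fc_def]
      refine Prod.ext ?_ rfl
      show fc (max 0 a + 0) = max 0 (fc (a + 0))
      rw [add_zero, add_zero, fc_id ha.1 ha.2,
        fc_id (le_trans (by norm_num) (le_max_left 0 a)) (max_le (by norm_num) ha.2)]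
    -- qmv5b
    · intro x
      obtain ⟨⟨a,b⟩, ha, hb⟩ := x
      simp only [Set.mem_Icc] at ha
      apply Subtype.ext
      simp only [qAdd, qPos, qZero, qOne, qNeg, fc_def]
      refine Prod.ext ?_ rfl
      show max 0 (fc (a + 0)) = fc (1 + fc (-1 + a))
      rw [add_zero, fc_id ha.1 ha.2]
      rcases le_total 0 a with h | h
      · rw [fc_id (t := -1 + a) (by linarith) (by linarith [ha.2]),
          show (1 : ℝ) + (-1 + a) = a from by ring, fc_id ha.1 ha.2, max_eq_right h]
      · rw [fc_lo (t := -1 + a) (by linarith), show (1 : ℝ) + -1 = 0 from by ring,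
          fc_zero, max_eq_left h]
    -- qmv5c
    · intro x
      obtain ⟨⟨a,b⟩, ha, hb⟩ := x
      simp only [Set.mem_Icc] at ha
      apply Subtype.ext
      simp only [qAdd, qNs, qZero, fc_def]
      refine Prod.ext ?_ rfl
      show fc (min 0 a + 0) = min 0 (fc (a + 0))
      rw [add_zero, add_zero, fc_id ha.1 ha.2,
        fc_id (le_min (by norm_num) ha.1) (le_trans (min_le_left 0 a) (by norm_num))]
    -- qmv5d
    · intro x
      obtain ⟨⟨a,b⟩, ha, hb⟩ := x
      simp only [Set.mem_Icc] at ha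
      apply Subtype.ext
      simp only [qAdd, qNs, qZero, qOne, qNeg, fc_def]
      refine Prod.ext ?_ rfl
      show min 0 (fc (a + 0)) = fc (-1 + fc (1 + a))
      rw [add_zero, fc_id ha.1 ha.2]
      rcases le_total 0 a with h | h
      · rw [fc_hi (t := 1 + a) (by linarith), show (-1 : ℝ) + 1 = 0 from by ring,
          fc_zero, min_eq_left h]
      · rw [fc_id (t := 1 + a) (by linarith [ha.1]) (by linarith),
          show (-1 : ℝ) + (1 + a) = a from by ring, fc_id ha.1 ha.2, min_eq_right h]
    -- qmv6
    · intro x y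
      obtain ⟨⟨a,b⟩, ha, hb⟩ := x
      obtain ⟨⟨c,d⟩, hc, hd⟩ := y
      simp only [Set.mem_Icc] at ha hc
      apply Subtype.ext
      simp only [qAdd, qPos, qNs, fc_def]
      refine Prod.ext ?_ rfl
      show fc (a + c) = fc (fc (max 0 a + max 0 c) + fc (min 0 a + min 0 c))
      rcases le_total 0 a with h1 | h1 <;> rcases le_total 0 c with h2 | h2
      · rw [max_eq_right h1, max_eq_right h2, min_eq_left h1, min_eq_left h2,
          add_zero, fc_zero, add_zero, fc_id (fc_lb _) (fc_ub _)]
      · rw [max_eq_right h1, max_eq_left h2, min_eq_left h1, min_eq_right h2,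
          add_zero, zero_add, fc_id ha.1 ha.2, fc_id hc.1 hc.2]
      · rw [max_eq_left h1, max_eq_right h2, min_eq_right h1, min_eq_left h2,
          zero_add, add_zero, fc_id hc.1 hc.2, fc_id ha.1 ha.2, add_comm c a]
      · rw [max_eq_left h1, max_eq_left h2, min_eq_right h1, min_eq_right h2,
          add_zero, fc_zero, zero_add, fc_id (fc_lb _) (fc_ub _)]
    -- qmv7
    · apply Subtype.ext
      simp only [qZero, qNeg]
      norm_num
    -- qmv8
    · intro x
      apply Subtype.ext
      simp only [qAdd, qNeg, qZero, fc_def]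
      refine Prod.ext ?_ rfl
      show fc (x.val.1 + -x.val.1) = 0
      rw [show x.val.1 + -x.val.1 = 0 from by ring, fc_zero]
    -- qmv9
    · intro x y
      apply Subtype.ext
      simp only [qAdd, qNeg, fc_def]
      refine Prod.ext ?_ (by norm_num)
      show -fc (x.val.1 + y.val.1) = fc (-x.val.1 + -y.val.1)
      rw [show -x.val.1 + -y.val.1 = -(x.val.1 + y.val.1) from by ring, fc_neg]
    -- qmv10
    · intro x
      apply Subtype.ext
      simp only [qNeg]
      refine Prod.ext (by norm_num) (by norm_num)
    -- qmv11
    · intro x y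
      obtain ⟨⟨a,b⟩, ha, hb⟩ := x
      obtain ⟨⟨c,d⟩, hc, hd⟩ := y
      simp only [Set.mem_Icc] at ha hc
      apply Subtype.ext
      simp only [qAdd, qPos, qNeg, fc_def]
      refine Prod.ext ?_ rfl
      show max 0 (fc (-a + fc (a + c))) = fc (-max 0 a + fc (max 0 a + max 0 c))
      rcases le_total 0 a with h1 | h1 <;> rcases le_total 0 c with h2 | h2
      · rw [max_eq_right h1, max_eq_right h2]
        rcases le_total (a + c) 1 with h3 | h3
        · rw [fc_id (by linarith) h3, show -a + (a + c) = c from by ring,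
            fc_id hc.1 hc.2, max_eq_right h2]
        · rw [fc_hi h3, fc_id (t := -a + 1) (by linarith) (by linarith),
            max_eq_right (by linarith)]
      · rw [max_eq_right h1, max_eq_left h2, add_zero, fc_id ha.1 ha.2,
          show -a + a = (0 : ℝ) from by ring, fc_zero,
          fc_id (t := a + c) (by linarith) (by linarith),
          show -a + (a + c) = c from by ring, fc_id hc.1 hc.2, max_eq_left h2]
      · rw [max_eq_left h1, max_eq_right h2, neg_zero, zero_add, zero_add,
          fc_id hc.1 hc.2, fc_id hc.1 hc.2,
          fc_id (t := a + c) (by linarith) (by linarith),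
          show -a + (a + c) = c from by ring, fc_id hc.1 hc.2, max_eq_right h2]
      · rw [max_eq_left h1, max_eq_left h2, neg_zero, add_zero, fc_zero, add_zero, fc_zero]
        rcases le_total (-1) (a + c) with h3 | h3
        · rw [fc_id h3 (by linarith), show -a + (a + c) = c from by ring,
            fc_id hc.1 hc.2, max_eq_left h2]
        · rw [fc_lo h3, fc_id (t := -a + -1) (by linarith) (by linarith),
            max_eq_left (by linarith)]
    -- qmv12
    · intro x y
      apply Subtype.ext
      rw [vee_fst, vee_fst, max_comm]
    -- qmv13
    · intro x y w
      apply Subtype.ext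
      simp only [vee_fst]
      rw [max_assoc]
    -- qmv14
    · intro x y w
      apply Subtype.ext
      rw [vee_fst]
      simp only [vee_fst, qAdd, fc_def]
      refine Prod.ext ?_ rfl
      show fc (x.val.1 + max y.val.1 w.val.1) = max (fc (x.val.1 + y.val.1)) (fc (x.val.1 + w.val.1))
      rcases le_total y.val.1 w.val.1 with h | h
      · rw [max_eq_right h, max_eq_right (fc_mono (by linarith))]
      · rw [max_eq_left h, max_eq_left (fc_mono (by linarith))]
    -- strong ps
    · intro x
      obtain ⟨⟨a,b⟩, ha, hb⟩ := x
      simp only [Set.mem_Icc] at ha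
      apply Subtype.ext
      simp only [qAdd, qPos, qZero, fc_def]
      refine Prod.ext ?_ rfl
      show max 0 a = fc (max 0 a + 0)
      rw [add_zero, fc_id (le_trans (by norm_num) (le_max_left 0 a)) (max_le (by norm_num) ha.2)]
    -- strong ns
    · intro x
      obtain ⟨⟨a,b⟩, ha, hb⟩ := x
      simp only [Set.mem_Icc] at ha
      apply Subtype.ext
      simp only [qAdd, qNs, qZero, fc_def]
      refine Prod.ext ?_ rfl
      show min 0 a = fc (min 0 a + 0)
      rw [add_zero, fc_id (le_min (by norm_num) ha.1) (le_trans (min_le_left 0 a) (by norm_num))]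
  · refine ⟨⟨(0, 0), by norm_num⟩, fun h => ?_⟩
    have h2 := congrArg (fun q : QC => q.val.2) h
    simp only [qAdd, qZero] at h2
    norm_num at h2
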